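/- arXiv:2603.29702 — 3 statements merged into one kernel-verified Lean document; each statement's English description precedes it below -/
import Mathlib

section
/- Let M ≥ 2 and S ≥ 3 be integers and n = M^S. Then: (a) for every scale s ∈ {3, …, S}, the number of indices x ∈ {1, …, n} that are scale-s hitters is exactly 2n/M²; and (b) for every set T ⊆ {3, …, S} all of whose elements are multiples of 3, the number of indices x ∈ {1, …, n} that are scale-s hitters simultaneously for every s ∈ T equals n·(2/M²)^{|T|}. In particular, for a uniformly random x, the hitting events at scales that are distinct multiples of 3 are mutually independent, each of probability 2/M². -/
attribute [local instance] Classical.propDecidable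

/-- `x` is a scale-`s` hitter: letting `(l, l+M^s]` be the scale-`s` interval containing `x`
(so `l = ((x−1)/M^s)·M^s`) with anchors `m_i = l + i·M^{s−1}` for `0 ≤ i ≤ M`, there is an
anchor with `m_i − M^{s−3} < x ≤ m_i + M^{s−3}` (as integers). -/
def IsHitter (M s x : ℕ) : Prop :=
  ∃ i ≤ M,
    ((((x - 1) / M ^ s) * M ^ s + i * M ^ (s - 1) : ℕ) : ℤ) - (M : ℤ) ^ (s - 3) < (x : ℤ) ∧
      (x : ℤ) ≤ (((x - 1) / M ^ s) * M ^ s + i * M ^ (s - 1) : ℕ) + (M : ℤ) ^ (s - 3)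

def Hit (M s y : ℕ) : Prop :=
  (y / M ^ (s - 3)) % M ^ 2 = 0 ∨ (y / M ^ (s - 3)) % M ^ 2 = M ^ 2 - 1

lemma hit_core' (M q k t : ℕ) (hM : 2 ≤ M) (hq : 0 < q) (ht : t < q) (hkM : k < M ^ 3) :
    (∃ i ≤ M, i * (q * M ^ 2) ≤ (q * k + t) + q ∧ q * k + t < i * (q * M ^ 2) + q) ↔
      (k % M ^ 2 = 0 ∨ k % M ^ 2 = M ^ 2 - 1) := by
  obtain ⟨m, hm⟩ : ∃ m, M ^ 2 = m + 1 := ⟨M ^ 2 - 1, (Nat.sub_add_cancel (Nat.one_le_pow _ _ (by omega))).symm⟩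
  have hM3 : M ^ 3 = (m + 1) * M := by rw [show M ^ 3 = M ^ 2 * M by ring, hm]
  rw [hm]
  rw [hM3] at hkM
  constructor
  · rintro ⟨i, hiM, h1, h2⟩
    have e1 : i * (q * (m + 1)) = q * (i * (m + 1)) := by ring
    have hk2 : k ≤ i * (m + 1) := by
      by_contra h; push_neg at h
      have h3 : q * (i * (m + 1) + 1) ≤ q * k := Nat.mul_le_mul_left q h
      have e2 : q * (i * (m + 1) + 1) = q * (i * (m + 1)) + q := by ring
      omega
    have hk1 : i * (m + 1) ≤ k + 1 := by
      by_contra h; push_neg at h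
      have h3 : q * (k + 2) ≤ q * (i * (m + 1)) := Nat.mul_le_mul_left q (by omega)
      have e2 : q * (k + 2) = q * k + 2 * q := by ring
      omega
    rcases Nat.eq_or_lt_of_le hk2 with he | hlt
    · left; rw [he]; exact Nat.mul_mod_left _ _
    · right
      have hki : k + 1 = i * (m + 1) := by omega
      obtain ⟨j, rfl⟩ : ∃ j, i = j + 1 := by
        cases i with
        | zero => omega
        | succ j => exact ⟨j, rfl⟩
      have e3 : (j + 1) * (m + 1) = (m + 1) * j + (m + 1) := by ring
      have hkk : k = (m + 1) * j + m := by omega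
      rw [hkk, Nat.mul_add_mod, Nat.mod_eq_of_lt (by omega)]
      omega
  · rintro (h | h)
    · obtain ⟨i, rfl⟩ : ∃ i, k = (m + 1) * i := Nat.dvd_of_mod_eq_zero h
      refine ⟨i, ?_, ?_, ?_⟩
      · by_contra hc; push_neg at hc
        have h3 : (m + 1) * (M + 1) ≤ (m + 1) * i := Nat.mul_le_mul_left _ (by omega)
        have e : (m + 1) * (M + 1) = (m + 1) * M + (m + 1) := by ring
        omega
      · have e : i * (q * (m + 1)) = q * ((m + 1) * i) := by ring
        omega
      · have e : i * (q * (m + 1)) = q * ((m + 1) * i) := by ring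
        omega
    · have hdm2 : (m + 1) * (k / (m + 1)) + k % (m + 1) = k := Nat.div_add_mod k (m + 1)
      have h' : k % (m + 1) = m := by omega
      obtain ⟨j, hj⟩ : ∃ j, j = k / (m + 1) := ⟨_, rfl⟩
      have hdm3 : (m + 1) * j + m = k := by rw [hj]; omega
      refine ⟨j + 1, ?_, ?_, ?_⟩
      · by_contra hc; push_neg at hc
        have h3 : (m + 1) * (M + 1) ≤ (m + 1) * (j + 1) := Nat.mul_le_mul_left _ (by omega)
        have e : (m + 1) * (M + 1) = (m + 1) * M + (m + 1) := by ring
        have e2 : (m + 1) * (j + 1) = (m + 1) * j + (m + 1) := by ring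
        omega
      · have e : (j + 1) * (q * (m + 1)) = q * ((m + 1) * j) + q * m + q := by ring
        have e4 : q * ((m + 1) * j + m) = q * ((m + 1) * j) + q * m := by ring
        have e5 : q * ((m + 1) * j + m) = q * k := by rw [hdm3]
        omega
      · have e : (j + 1) * (q * (m + 1)) = q * ((m + 1) * j) + q * m + q := by ring
        have e4 : q * ((m + 1) * j + m) = q * ((m + 1) * j) + q * m := by ring
        have e5 : q * ((m + 1) * j + m) = q * k := by rw [hdm3]
        omega

lemma cast_helper (x L r B q : ℕ) (hx : 1 ≤ x) (hL : L + r = x - 1) :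
    (((L + B : ℕ) : ℤ) - (q : ℤ) < (x : ℤ) ∧ (x : ℤ) ≤ ((L + B : ℕ) : ℤ) + (q : ℤ)) ↔
      (B ≤ r + q ∧ r < B + q) := by
  push_cast
  omega

lemma isHitter_iff (M s x : ℕ) (hM : 2 ≤ M) (hs : 3 ≤ s) (hx : 1 ≤ x) :
    IsHitter M s x ↔ Hit M s (x - 1) := by
  have hq : 0 < M ^ (s - 3) := pow_pos (by omega : 0 < M) _
  have hpow1 : M ^ (s - 1) = M ^ (s - 3) * M ^ 2 := by rw [← pow_add]; congr 1; omega
  have hpow2 : M ^ s = M ^ (s - 3) * M ^ 3 := by rw [← pow_add]; congr 1; omega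
  have hr : (x - 1) % M ^ s < M ^ (s - 3) * M ^ 3 := hpow2 ▸ Nat.mod_lt _ (by positivity)
  have step1 : IsHitter M s x ↔
      ∃ i ≤ M, i * M ^ (s - 1) ≤ (x - 1) % M ^ s + M ^ (s - 3) ∧
        (x - 1) % M ^ s < i * M ^ (s - 1) + M ^ (s - 3) := by
    unfold IsHitter
    rw [show ((M : ℤ)) ^ (s - 3) = ((M ^ (s - 3) : ℕ) : ℤ) from by push_cast; ring]
    exact exists_congr fun i => and_congr_right fun _ =>
      cast_helper x _ _ _ _ hx (Nat.div_add_mod' _ _)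
  have step2 := hit_core' M (M ^ (s - 3)) ((x - 1) % M ^ s / M ^ (s - 3))
      ((x - 1) % M ^ s % M ^ (s - 3)) hM hq (Nat.mod_lt _ hq) (Nat.div_lt_of_lt_mul hr)
  rw [Nat.div_add_mod] at step2
  have hmod : ((x - 1) % M ^ s / M ^ (s - 3)) % M ^ 2 = ((x - 1) / M ^ (s - 3)) % M ^ 2 := by
    rw [← Nat.mod_mul_right_div_self, ← Nat.mod_mul_right_div_self]
    congr 1
    exact Nat.mod_mod_of_dvd _ ⟨M, by rw [← hpow1, ← pow_succ]; congr 1; omega⟩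
  rw [← hpow1] at step2
  rw [step1, step2, hmod]
  rfl

lemma count_split (p t : ℕ) (P Q : ℕ → Prop) :
    ((Finset.range (p * t)).filter (fun y => P (y % p) ∧ Q (y / p))).card
      = ((Finset.range p).filter P).card * ((Finset.range t).filter Q).card := by
  rcases Nat.eq_zero_or_pos p with rfl | hp
  · simp
  rw [← Finset.card_product]
  apply Finset.card_bij' (i := fun y _ => (y % p, y / p)) (j := fun z _ => z.1 + p * z.2)
  · intro y hy
    rw [Finset.mem_filter, Finset.mem_range] at hy
    rw [Finset.mem_product, Finset.mem_filter, Finset.mem_filter,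
      Finset.mem_range, Finset.mem_range]
    exact ⟨⟨Nat.mod_lt _ hp, hy.2.1⟩, ⟨Nat.div_lt_of_lt_mul hy.1, hy.2.2⟩⟩
  · intro z hz
    rw [Finset.mem_product, Finset.mem_filter, Finset.mem_filter,
      Finset.mem_range, Finset.mem_range] at hz
    rw [Finset.mem_filter, Finset.mem_range]
    have e1 : (z.1 + p * z.2) % p = z.1 := by
      rw [Nat.add_mul_mod_self_left, Nat.mod_eq_of_lt hz.1.1]
    have e2 : (z.1 + p * z.2) / p = z.2 := by
      rw [Nat.add_mul_div_left _ _ hp, Nat.div_eq_of_lt hz.1.1, Nat.zero_add]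
    refine ⟨?_, by rw [e1]; exact hz.1.2, by rw [e2]; exact hz.2.2⟩
    have h3 : p * (z.2 + 1) ≤ p * t := Nat.mul_le_mul_left _ (by omega)
    have h4 : p * (z.2 + 1) = p * z.2 + p := by ring
    omega
  · intro y _
    exact Nat.mod_add_div y p
  · intro z hz
    rw [Finset.mem_product, Finset.mem_filter, Finset.mem_filter,
      Finset.mem_range, Finset.mem_range] at hz
    have e1 : (z.1 + p * z.2) % p = z.1 := by
      rw [Nat.add_mul_mod_self_left, Nat.mod_eq_of_lt hz.1.1]
    have e2 : (z.1 + p * z.2) / p = z.2 := by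
      rw [Nat.add_mul_div_left _ _ hp, Nat.div_eq_of_lt hz.1.1, Nat.zero_add]
    rw [e1, e2]

lemma count_mod_two (p t : ℕ) (hp : 2 ≤ p) :
    ((Finset.range (p * t)).filter (fun y => y % p = 0 ∨ y % p = p - 1)).card = 2 * t := by
  have h := count_split p t (fun z => z = 0 ∨ z = p - 1) (fun _ => True)
  simp only [and_true] at h
  refine h.trans ?_
  convert_to (({0, p - 1} : Finset ℕ).card * (Finset.range t).card = 2 * t) using 3
  · ext z
    simp only [Finset.mem_filter, Finset.mem_range, Finset.mem_insert, Finset.mem_singleton]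
    omega
  · ext z
    simp only [Finset.mem_filter, Finset.mem_range]
    tauto
  · rw [Finset.card_pair (by omega : (0 : ℕ) ≠ p - 1), Finset.card_range]

lemma hit_mod (M s e y : ℕ) (hs : 3 ≤ s) (hse : s - 1 ≤ e) :
    Hit M s (y % M ^ e) ↔ Hit M s y := by
  have hpow : M ^ (s - 3) * M ^ 2 = M ^ (s - 1) := by rw [← pow_add]; congr 1; omega
  have key : ∀ z : ℕ, (z / M ^ (s - 3)) % M ^ 2 = (z % M ^ (s - 1)) / M ^ (s - 3) := by
    intro z
    rw [← Nat.mod_mul_right_div_self, hpow]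
  unfold Hit
  rw [key, key, Nat.mod_mod_of_dvd _ (pow_dvd_pow M hse)]

lemma main_count (M : ℕ) (hM : 2 ≤ M) (T : Finset ℕ) :
    (∀ s ∈ T, 3 ≤ s ∧ 3 ∣ s) → ∀ R : ℕ, (∀ s ∈ T, s ≤ R + 1) →
      ((Finset.range (M ^ R)).filter (fun y => ∀ s ∈ T, Hit M s y)).card
        = 2 ^ T.card * M ^ (R - 2 * T.card) := by
  induction T using Finset.induction_on_max with
  | empty => intro _ R _; simp
  | insert a T hlt ih =>
    intro hT R hR
    have ha3 : 3 ≤ a := (hT a (Finset.mem_insert_self a T)).1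
    have had : 3 ∣ a := (hT a (Finset.mem_insert_self a T)).2
    have haR : a ≤ R + 1 := hR a (Finset.mem_insert_self a T)
    have hTsub : ∀ s ∈ T, s ≤ a - 3 := by
      intro s hs
      have h1 := hlt s hs
      obtain ⟨u, rfl⟩ := (hT s (Finset.mem_insert_of_mem hs)).2
      obtain ⟨v, rfl⟩ := had
      omega
    have hnotmem : a ∉ T := fun h => absurd (hlt a h) (lt_irrefl a)
    have hcard : 3 * T.card ≤ a - 3 := by
      have h1 : T ⊆ (Finset.Icc 1 ((a - 3) / 3)).image (fun m => 3 * m) := by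
        intro s hs
        have hs3 := (hT s (Finset.mem_insert_of_mem hs)).1
        obtain ⟨u, rfl⟩ := (hT s (Finset.mem_insert_of_mem hs)).2
        have h2 := hTsub _ hs
        exact Finset.mem_image.2 ⟨u, Finset.mem_Icc.2 ⟨by omega, by omega⟩, rfl⟩
      have h2 := Finset.card_le_card h1
      have h3 := Finset.card_image_le (s := Finset.Icc 1 ((a - 3) / 3)) (f := fun m => 3 * m)
      have h4 : (Finset.Icc 1 ((a - 3) / 3)).card = (a - 3) / 3 := by simp
      omega
    have hpow : M ^ R = M ^ (a - 3) * (M ^ 2 * M ^ (R - (a - 3) - 2)) := by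
      rw [← pow_add, ← pow_add]
      congr 1
      omega
    have h := count_split (M ^ (a - 3)) (M ^ 2 * M ^ (R - (a - 3) - 2))
      (fun z => ∀ s ∈ T, Hit M s z) (fun b => b % M ^ 2 = 0 ∨ b % M ^ 2 = M ^ 2 - 1)
    have h1 := ih (fun s hs => hT s (Finset.mem_insert_of_mem hs)) (a - 3)
      (fun s hs => by have := hTsub s hs; omega)
    have h2 := count_mod_two (M ^ 2) (M ^ (R - (a - 3) - 2))
      (le_trans hM (Nat.le_self_pow (by omega) M))
    refine Eq.trans (congrArg Finset.card ?_) (h.trans ?_)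
    · ext y
      simp only [Finset.mem_filter, Finset.mem_range, Finset.forall_mem_insert]
      rw [← hpow]
      constructor
      · rintro ⟨hy1, hy2, hy3⟩
        refine ⟨hy1, fun s hs => ?_, hy2⟩
        exact (hit_mod M s (a - 3) y (hT s (Finset.mem_insert_of_mem hs)).1
          (by have := hTsub s hs; omega)).2 (hy3 s hs)
      · rintro ⟨hy1, hy2, hy3⟩
        refine ⟨hy1, hy3, fun s hs => ?_⟩
        exact (hit_mod M s (a - 3) y (hT s (Finset.mem_insert_of_mem hs)).1
          (by have := hTsub s hs; omega)).1 (hy2 s hs)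
    · refine Eq.trans (congrArg₂ (· * ·)
        ((congrArg Finset.card ?_).trans h1) ((congrArg Finset.card ?_).trans h2)) ?_
      · ext y; simp only [Finset.mem_filter]
      · ext y; simp only [Finset.mem_filter]
      · rw [Finset.card_insert_of_notMem hnotmem,
          show R - 2 * (T.card + 1) = (a - 3 - 2 * T.card) + (R - (a - 3) - 2) from by omega,
          pow_add]
        ring

lemma card_Icc_filter (n : ℕ) (P : ℕ → Prop) :
    ((Finset.Icc 1 n).filter P).card = ((Finset.range n).filter (fun y => P (y + 1))).card := by
  refine Finset.card_bij' (fun x _ => x - 1) (fun y _ => y + 1) ?_ ?_ ?_ ?_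
  · intro x hx
    simp only [Finset.mem_filter, Finset.mem_Icc] at hx
    simp only [Finset.mem_filter, Finset.mem_range]
    refine ⟨by omega, ?_⟩
    rw [show x - 1 + 1 = x by omega]
    exact hx.2
  · intro y hy
    simp only [Finset.mem_filter, Finset.mem_range] at hy
    simp only [Finset.mem_filter, Finset.mem_Icc]
    exact ⟨⟨by omega, by omega⟩, hy.2⟩
  · intro x hx
    simp only [Finset.mem_filter, Finset.mem_Icc] at hx
    beta_reduce
    omega
  · intro y hy
    beta_reduce
    omega

/-- For `M ≥ 2`, `S ≥ 3`, `n = M^S`: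
(a) for every scale `s ∈ {3,…,S}`, the number of `x ∈ {1,…,n}` that are scale-`s` hitters is
exactly `2n/M² = 2·M^{S−2}`; and
(b) for every set `T ⊆ {3,…,S}` of multiples of 3, the number of `x ∈ {1,…,n}` that are
scale-`s` hitters for every `s ∈ T` is exactly `n·(2/M²)^{|T|} = 2^{|T|}·M^{S−2|T|}`. -/
theorem stmt13 (M S : ℕ) (hM : 2 ≤ M) (hS : 3 ≤ S) :
    (∀ s ∈ Finset.Icc 3 S,
      ((Finset.Icc 1 (M ^ S)).filter fun x => IsHitter M s x).card = 2 * M ^ (S - 2)) ∧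
    (∀ T : Finset ℕ, T ⊆ Finset.Icc 3 S → (∀ s ∈ T, 3 ∣ s) →
      ((Finset.Icc 1 (M ^ S)).filter fun x => ∀ s ∈ T, IsHitter M s x).card =
        2 ^ T.card * M ^ (S - 2 * T.card)) := by
  constructor
  · intro s hs
    rw [Finset.mem_Icc] at hs
    rw [card_Icc_filter]
    have hpow : M ^ S = M ^ (s - 3) * (M ^ 2 * M ^ (S - s + 1)) := by
      rw [← pow_add, ← pow_add]
      congr 1
      omega
    have h := count_split (M ^ (s - 3)) (M ^ 2 * M ^ (S - s + 1))
      (fun _ => True) (fun b => b % M ^ 2 = 0 ∨ b % M ^ 2 = M ^ 2 - 1)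
    have h2 := count_mod_two (M ^ 2) (M ^ (S - s + 1))
      (le_trans hM (Nat.le_self_pow (by omega) M))
    refine Eq.trans (congrArg Finset.card ?_) (h.trans ?_)
    · ext y
      simp only [Finset.mem_filter, Finset.mem_range, true_and]
      rw [← hpow]
      refine and_congr_right fun _ => ?_
      rw [isHitter_iff M s (y + 1) hM hs.1 (by omega), Nat.add_sub_cancel]
      exact Iff.rfl
    · refine Eq.trans (congrArg₂ (· * ·)
        ((congrArg Finset.card ?_).trans (by simp : ((Finset.range (M ^ (s - 3))).filter
          (fun _ => True)).card = M ^ (s - 3))) ((congrArg Finset.card ?_).trans h2)) ?_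
      · ext y; simp only [Finset.mem_filter]
      · ext y; simp only [Finset.mem_filter]
      · rw [show S - 2 = (s - 3) + (S - s + 1) from by omega, pow_add]
        ring
  · intro T hTsub hTd
    have hc := card_Icc_filter (M ^ S) (fun x => ∀ s ∈ T, IsHitter M s x)
    have h := main_count M hM T
      (fun s hs => ⟨(Finset.mem_Icc.1 (hTsub hs)).1, hTd s hs⟩) S
      (fun s hs => by have := (Finset.mem_Icc.1 (hTsub hs)).2; omega)
    refine Eq.trans (congrArg Finset.card ?_)
      (hc.trans (Eq.trans (congrArg Finset.card ?_) h))
    · ext x; simp only [Finset.mem_filter]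
    · ext y
      simp only [Finset.mem_filter, Finset.mem_range]
      refine and_congr_right fun _ => forall₂_congr fun s hs => ?_
      rw [isHitter_iff M s (y + 1) hM (Finset.mem_Icc.1 (hTsub hs)).1 (by omega),
        Nat.add_sub_cancel]
end

section
/- Let M ≥ 2 and S ≥ 3 be integers with S a multiple of 3 and M² ≥ S^{17/100}, and let n = M^S. Then the number of indices x ∈ {1, …, n} for which the number of scales s ∈ {3, …, S} with s a multiple of 3 such that x is a scale-s hitter exceeds S^{83/100} is at most n·exp(−S^{66/100}/2). -/
attribute [local instance] Classical.propDecidable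

lemma log_aux (w : ℝ) (hw : 0 ≤ w) : Real.log (1+w) ≤ (w^2+2*w)/(2+2*w) := by
  have hd : (0:ℝ) < 2+2*w := by linarith
  rw [Real.log_le_iff_le_exp (by linarith)]
  have h4 : ∑ i ∈ Finset.range 4, ((w^2+2*w)/(2+2*w))^i / (Nat.factorial i) ≤
      Real.exp ((w^2+2*w)/(2+2*w)) := Real.sum_le_exp_of_nonneg (by positivity) 4
  refine le_trans ?_ h4
  rw [Finset.sum_range_succ, Finset.sum_range_succ, Finset.sum_range_succ,
    Finset.sum_range_succ, Finset.sum_range_zero]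
  simp only [pow_zero, pow_one, Nat.factorial]
  norm_num
  rw [div_pow, div_pow, div_div, div_div]
  have key : 1 + (w^2+2*w)/(2+2*w) + (w^2+2*w)^2/((2+2*w)^2*2) + (w^2+2*w)^3/((2+2*w)^3*6)
      - (1+w) = (w^6+12*w^5+18*w^4+8*w^3)/(6*(2+2*w)^3) := by
    field_simp
    ring
  have hnn : (0:ℝ) ≤ (w^6+12*w^5+18*w^4+8*w^3)/(6*(2+2*w)^3) := by positivity
  linarith [key ▸ hnn]

lemma analytic_ineq (u p L2 : ℝ) (hu : 3 < u) (hp0 : 0 ≤ p) (hp1 : p ≤ 1/2)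
    (hpu : p * u ≤ 2) (hL2 : 0.6931471803 ≤ L2) :
    (p^2 + 2*p)/(2 + 2*p)/3 ≤ L2/u - 1/(2*u^2) := by
  have hu0 : (0:ℝ) < u := by linarith
  have hdp : (0:ℝ) < 2 + 2*p := by linarith
  rcases le_or_gt u 4 with h4 | h4
  · have hQ : (p^2+2*p)/(2+2*p) ≤ 5/12 := by
      rw [div_le_iff₀ hdp]
      nlinarith [mul_nonneg (by linarith : (0:ℝ) ≤ 1 - 2*p) (by linarith : (0:ℝ) ≤ 6*p + 10)]
    have target : (5:ℝ)/36 ≤ L2/u - 1/(2*u^2) := by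
      have key : L2/u - 1/(2*u^2) - 5/36 = (72*u*L2 - 36 - 10*u^2)/(72*u^2) := by
        field_simp
        ring
      have hnum : (0:ℝ) ≤ 72*u*L2 - 36 - 10*u^2 := by
        nlinarith [mul_nonneg (by linarith : (0:ℝ) ≤ u - 3) (by linarith : (0:ℝ) ≤ 4 - u),
          mul_nonneg (by linarith : (0:ℝ) ≤ L2 - 0.6931471803) hu0.le]
      have : (0:ℝ) ≤ (72*u*L2 - 36 - 10*u^2)/(72*u^2) := by positivity
      linarith [key ▸ this]
    linarith
  · have hQ : (p^2+2*p)/(2+2*p) ≤ 2*(1+u)/(u*(u+2)) := by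
      rw [div_le_div_iff₀ hdp (by positivity)]
      nlinarith [mul_nonneg (by linarith : (0:ℝ) ≤ 2 - p*u)
        (by nlinarith : (0:ℝ) ≤ 2*u + 2*u^2 + p*u^2 + 2*p*u)]
    have target : 2*(1+u)/(u*(u+2))/3 ≤ L2/u - 1/(2*u^2) := by
      have key : L2/u - 1/(2*u^2) - 2*(1+u)/(u*(u+2))/3 =
          (6*L2*u*(u+2) - 3*(u+2) - 4*u*(1+u))/(6*u^2*(u+2)) := by
        field_simp
        ring
      have hnum : (0:ℝ) ≤ 6*L2*u*(u+2) - 3*(u+2) - 4*u*(1+u) := by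
        nlinarith [sq_nonneg (u-4), mul_nonneg (by linarith : (0:ℝ) ≤ L2 - 0.6931471803)
          (by nlinarith : (0:ℝ) ≤ 6*u^2 + 12*u), (by linarith : (0:ℝ) ≤ u - 4)]
      have : (0:ℝ) ≤ (6*L2*u*(u+2) - 3*(u+2) - 4*u*(1+u))/(6*u^2*(u+2)) := by positivity
      linarith [key ▸ this]
    have : (p^2+2*p)/(2+2*p)/3 ≤ 2*(1+u)/(u*(u+2))/3 := by linarith
    linarith

lemma hitter_digit {M s x : ℕ} (hM : 2 ≤ M) (hs : 3 ≤ s) (hx : 1 ≤ x)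
    (h : IsHitter M s x) :
    ((x - 1) / M ^ (s - 3)) % M ^ 2 = 0 ∨ ((x - 1) / M ^ (s - 3)) % M ^ 2 = M ^ 2 - 1 := by
  obtain ⟨i, hiM, h1, h2⟩ := h
  have hMpos : 0 < M := by omega
  set y := x - 1 with hy
  have hxy : x = y + 1 := by omega
  have hA : 0 < M ^ (s - 3) := pow_pos hMpos _
  have h1' : (y / M ^ s) * M ^ s + i * M ^ (s - 1) < y + 1 + M ^ (s - 3) := by
    have h1'' : (((y / M ^ s) * M ^ s + i * M ^ (s - 1) : ℕ) : ℤ) <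
        (x : ℤ) + ((M ^ (s - 3) : ℕ) : ℤ) := by push_cast at h1 ⊢; linarith
    rw [hxy] at h1''
    exact_mod_cast h1''
  have h2' : y + 1 ≤ (y / M ^ s) * M ^ s + i * M ^ (s - 1) + M ^ (s - 3) := by
    have h2'' : (x : ℤ) ≤ (((y / M ^ s) * M ^ s + i * M ^ (s - 1) : ℕ) : ℤ) +
        ((M ^ (s - 3) : ℕ) : ℤ) := by push_cast at h2 ⊢; linarith
    rw [hxy] at h2''
    exact_mod_cast h2''
  have hMs1 : M ^ (s - 1) = M ^ (s - 3) * M ^ 2 := by rw [← pow_add]; congr 1; omega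
  have hMs : M ^ s = M ^ (s - 3) * M ^ 2 * M := by
    have h3 : M ^ (s - 3) * M ^ 2 * M ^ 1 = M ^ (s - 3 + 2 + 1) := by rw [← pow_add, ← pow_add]
    rw [pow_one] at h3
    rw [h3]; congr 1; omega
  set A := M ^ (s - 3) with hAdef
  set c := y / M ^ s with hc
  set r := y % M ^ s with hrdef
  have hyd : M ^ s * c + r = y := Nat.div_add_mod y (M ^ s)
  set q := r / A with hq
  have hrq : A * q + r % A = r := Nat.div_add_mod r A
  have hrA : r % A < A := Nat.mod_lt _ hA
  have e2 : r + 1 ≤ i * (A * M ^ 2) + A := by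
    rw [hMs1, ← hyd] at h2'
    linarith
  have e1 : i * (A * M ^ 2) < r + 1 + A := by
    rw [hMs1, ← hyd] at h1'
    linarith
  have f1' : q ≤ i * M ^ 2 := by
    have f1 : q < i * M ^ 2 + 1 := by
      rw [hq, Nat.div_lt_iff_lt_mul hA]
      have : (i * M ^ 2 + 1) * A = i * (A * M ^ 2) + A := by ring
      linarith
    omega
  have f2' : i * M ^ 2 ≤ q + 1 := by
    have f2 : A * (i * M ^ 2) < A * (q + 2) := by nlinarith
    have := Nat.lt_of_mul_lt_mul_left f2
    omega
  have hyA : y / A = r / A + M ^ 2 * (M * c) := by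
    have hy2 : y = r + A * (M ^ 2 * (M * c)) := by rw [← hyd, hMs]; ring
    rw [hy2, Nat.add_mul_div_left _ _ hA]
  have goalq : (y / A) % M ^ 2 = q % M ^ 2 := by
    rw [hyA, Nat.add_mul_mod_self_left]
  rw [goalq]
  rcases eq_or_lt_of_le f2' with hv | hv
  · right
    rcases i with _ | i'
    · simp at hv
    · set C := M ^ 2 with hCdef
      have hC : 1 ≤ C := Nat.one_le_pow _ _ hMpos
      have hq2 : q + 1 = i' * C + C := by rw [← hv]; ring
      set B := i' * C with hBdef
      have hqB : q = B + (C - 1) := by omega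
      rw [hqB, hBdef, mul_comm i' C, Nat.mul_add_mod]
      exact Nat.mod_eq_of_lt (by omega)
  · left
    have hv' : i * M ^ 2 = q := Nat.le_antisymm (Nat.lt_succ_iff.mp hv) f1'
    rw [← hv']
    exact Nat.mul_mod_left i (M ^ 2)

lemma pow_card_eq_prod (s : Finset ℕ) (P : ℕ → Prop) [DecidablePred P] :
    2 ^ (s.filter P).card = ∏ j ∈ s, (if P j then 2 else 1) := by
  rw [← Finset.prod_filter_mul_prod_filter_not s P]
  rw [Finset.prod_congr rfl (fun j hj => if_pos (Finset.mem_filter.mp hj).2),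
      Finset.prod_congr rfl (fun j hj => if_neg (Finset.mem_filter.mp hj).2)]
  simp

lemma prod_digit_sum (N : ℕ) (hN : 0 < N) (w : ℕ → ℕ) (hw : ∀ a, w (a % N) = w a) :
    ∀ k, ∑ y ∈ Finset.range (N ^ k), ∏ j ∈ Finset.range k, w (y / N ^ j)
        = (∑ a ∈ Finset.range N, w a) ^ k := by
  intro k
  induction k with
  | zero => simp
  | succ k ih =>
    have step : ∑ y ∈ Finset.range (N ^ (k+1)), ∏ j ∈ Finset.range (k+1), w (y / N ^ j)
        = ∑ p ∈ Finset.range (N ^ k) ×ˢ Finset.range N,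
            (∏ j ∈ Finset.range k, w (p.1 / N ^ j)) * w p.2 := by
      apply Finset.sum_nbij' (i := fun y => (y / N, y % N)) (j := fun p => N * p.1 + p.2)
      · intro y hy
        simp only [Finset.mem_range, Finset.mem_product] at *
        refine ⟨?_, Nat.mod_lt _ hN⟩
        rw [Nat.div_lt_iff_lt_mul hN]
        rwa [← pow_succ]
      · intro p hp
        simp only [Finset.mem_range, Finset.mem_product] at *
        calc N * p.1 + p.2 < N * p.1 + N := by omega
          _ = N * (p.1 + 1) := by ring
          _ ≤ N * N ^ k := Nat.mul_le_mul_left _ (by omega)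
          _ = N ^ (k+1) := (pow_succ' N k).symm
      · intro y _; exact Nat.div_add_mod y N
      · intro p hp
        simp only [Finset.mem_range, Finset.mem_product] at hp
        have h1 : (N * p.1 + p.2) / N = p.1 := by
          rw [Nat.mul_add_div hN, Nat.div_eq_of_lt hp.2]
          omega
        have h2 : (N * p.1 + p.2) % N = p.2 := by
          rw [Nat.mul_add_mod]; exact Nat.mod_eq_of_lt hp.2
        simp [h1, h2]
      · intro y hy
        rw [Finset.prod_range_succ']
        congr 1
        · apply Finset.prod_congr rfl
          intro j hj
          congr 1
          rw [pow_succ', ← Nat.div_div_eq_div_mul]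
        · rw [pow_zero, Nat.div_one]
          exact (hw y).symm
    rw [step, Finset.sum_product]
    simp only []
    rw [← Finset.sum_mul_sum (Finset.range (N ^ k)) (Finset.range N)
      (fun c => ∏ j ∈ Finset.range k, w (c / N ^ j)) w, ih, pow_succ]

lemma block_count (M : ℕ) (hM : 2 ≤ M) :
    ∑ a ∈ Finset.range (M ^ 3), (if a % M ^ 2 = 0 ∨ a % M ^ 2 = M ^ 2 - 1 then 2 else 1)
      = M ^ 3 + 2 * M := by
  have hM2 : 0 < M ^ 2 := pow_pos (by omega) _
  have hsum : ∀ a : ℕ, (if a % M ^ 2 = 0 ∨ a % M ^ 2 = M ^ 2 - 1 then 2 else 1)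
      = 1 + (if a % M ^ 2 = 0 ∨ a % M ^ 2 = M ^ 2 - 1 then 1 else 0) := by
    intro a; split <;> rfl
  simp only [hsum]
  rw [Finset.sum_add_distrib, Finset.sum_const, ← Finset.card_filter]
  have hsplit : (Finset.range (M ^ 3)).filter
        (fun a => a % M ^ 2 = 0 ∨ a % M ^ 2 = M ^ 2 - 1)
      = (Finset.range (M ^ 3)).filter (fun a => a % M ^ 2 = 0) ∪
        (Finset.range (M ^ 3)).filter (fun a => a % M ^ 2 = M ^ 2 - 1) :=
    Finset.filter_or _ _ _
  have hdisj : Disjoint ((Finset.range (M ^ 3)).filter (fun a => a % M ^ 2 = 0))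
      ((Finset.range (M ^ 3)).filter (fun a => a % M ^ 2 = M ^ 2 - 1)) := by
    rw [Finset.disjoint_filter]
    intro x _ h0 h1
    rw [h0] at h1
    have h4 : 2 ≤ M ^ 2 := by nlinarith
    omega
  have hpow : M ^ 3 = M ^ 2 * M := by ring
  have hc1 : (Finset.range (M ^ 3)).filter (fun a => a % M ^ 2 = 0)
      = (Finset.range M).image (fun b => M ^ 2 * b) := by
    ext a
    simp only [Finset.mem_filter, Finset.mem_range, Finset.mem_image]
    constructor
    · rintro ⟨hlt, hmod⟩
      refine ⟨a / M ^ 2, ?_, ?_⟩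
      · rw [Nat.div_lt_iff_lt_mul hM2]; rwa [hpow, mul_comm] at hlt
      · have := Nat.div_add_mod a (M ^ 2); omega
    · rintro ⟨b, hb, rfl⟩
      exact ⟨by rw [hpow]; exact (Nat.mul_lt_mul_left hM2).mpr hb, Nat.mul_mod_right _ _⟩
  have hc2 : (Finset.range (M ^ 3)).filter (fun a => a % M ^ 2 = M ^ 2 - 1)
      = (Finset.range M).image (fun b => M ^ 2 * b + (M ^ 2 - 1)) := by
    ext a
    simp only [Finset.mem_filter, Finset.mem_range, Finset.mem_image]
    constructor
    · rintro ⟨hlt, hmod⟩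
      refine ⟨a / M ^ 2, ?_, ?_⟩
      · rw [Nat.div_lt_iff_lt_mul hM2]; rwa [hpow, mul_comm] at hlt
      · have := Nat.div_add_mod a (M ^ 2); omega
    · rintro ⟨b, hb, rfl⟩
      constructor
      · have h1 : M ^ 2 * b + (M ^ 2 - 1) < M ^ 2 * (b + 1) := by
          have : 0 < M ^ 2 := hM2
          rw [Nat.mul_add, Nat.mul_one]; omega
        have h2 : M ^ 2 * (b + 1) ≤ M ^ 2 * M := Nat.mul_le_mul_left _ (by omega)
        rw [hpow]; omega
      · rw [Nat.mul_add_mod]; exact Nat.mod_eq_of_lt (by omega)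
  have hinj1 : Function.Injective (fun b => M ^ 2 * b) := fun a b h => by
    simpa using Nat.eq_of_mul_eq_mul_left hM2 h
  have hinj2 : Function.Injective (fun b => M ^ 2 * b + (M ^ 2 - 1)) := fun a b h => by
    simp only [add_left_inj] at h
    exact Nat.eq_of_mul_eq_mul_left hM2 h
  rw [hsplit, Finset.card_union_of_disjoint hdisj, hc1, hc2,
    Finset.card_image_of_injective _ hinj1, Finset.card_image_of_injective _ hinj2,
    Finset.card_range, Finset.card_range]
  simp only [smul_eq_mul, mul_one, Finset.card_range]
  omega

lemma scales_le {M S k x : ℕ} (hM : 2 ≤ M) (hk : S = 3 * k) (hx : 1 ≤ x) :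
    ((Finset.Icc 3 S).filter fun s => 3 ∣ s ∧ IsHitter M s x).card ≤
    ((Finset.range k).filter fun j =>
      ((x-1) / (M^3)^j) % M^2 = 0 ∨ ((x-1) / (M^3)^j) % M^2 = M^2 - 1).card := by
  apply Finset.card_le_card_of_injOn (fun s => s / 3 - 1)
  · intro s hs
    simp only [Finset.mem_coe, Finset.mem_filter, Finset.mem_Icc, Finset.mem_range] at hs ⊢
    obtain ⟨⟨h3s, hsS⟩, hdvd, hhit⟩ := hs
    refine ⟨by omega, ?_⟩
    have h1 := hitter_digit hM h3s hx hhit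
    have h2 : (M^3)^(s/3-1) = M^(s-3) := by rw [← pow_mul]; congr 1; omega
    rw [h2]
    exact h1
  · intro a ha b hb hab
    simp only [Finset.coe_filter, Finset.mem_Icc, Set.mem_setOf_eq] at ha hb
    obtain ⟨⟨ha3, _⟩, hda, _⟩ := ha
    obtain ⟨⟨hb3, _⟩, hdb, _⟩ := hb
    have hab' : a / 3 - 1 = b / 3 - 1 := hab
    omega

/-- For `M ≥ 2`, `S ≥ 3` a multiple of 3 with `M² ≥ S^{17/100}`, and
`n = M^S`: the number of indices `x ∈ {1,…,n}` that are "frequent hitters" — i.e. for which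
the number of scales `s ∈ {3,…,S}` divisible by 3 such that `x` is a scale-`s` hitter
exceeds `S^{83/100}` — is at most `n·exp(−S^{66/100}/2)`. -/
theorem stmt14 (M S : ℕ) (hM : 2 ≤ M) (hS : 3 ≤ S) (hS3 : 3 ∣ S)
    (hM2 : (S : ℝ) ^ ((17 : ℝ) / 100) ≤ (M : ℝ) ^ 2) :
    (((Finset.Icc 1 (M ^ S)).filter fun x =>
        (S : ℝ) ^ ((83 : ℝ) / 100) <
          (((Finset.Icc 3 S).filter fun s => 3 ∣ s ∧ IsHitter M s x).card : ℝ)).card : ℝ) ≤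
      (M ^ S : ℝ) * Real.exp (-(S : ℝ) ^ ((66 : ℝ) / 100) / 2) := by
  obtain ⟨k, hk⟩ := hS3
  have hMpos : 0 < M := by omega
  have hk1 : 1 ≤ k := by omega
  have hS0 : (0:ℝ) < (S:ℝ) := by exact_mod_cast Nat.lt_of_lt_of_le (by norm_num) hS
  set t : ℝ := (S : ℝ) ^ ((83 : ℝ) / 100) with htdef
  set u : ℝ := (S : ℝ) ^ ((17 : ℝ) / 100) with hudef
  set E : ℝ := (S : ℝ) ^ ((66 : ℝ) / 100) with hEdef
  set D : ℕ → ℕ := fun y => ((Finset.range k).filter fun j =>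
      (y / (M^3)^j) % M^2 = 0 ∨ (y / (M^3)^j) % M^2 = M^2 - 1).card with hDdef
  set F := (Finset.Icc 1 (M ^ S)).filter fun x =>
      t < (((Finset.Icc 3 S).filter fun s => 3 ∣ s ∧ IsHitter M s x).card : ℝ) with hFdef
  clear_value t u E D F
  have hu0 : (0:ℝ) < u := by rw [hudef]; exact Real.rpow_pos_of_pos hS0 _
  have ht0 : (0:ℝ) < t := by rw [htdef]; exact Real.rpow_pos_of_pos hS0 _
  have htu : t * u = S := by
    rw [htdef, hudef, ← Real.rpow_add hS0]
    norm_num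
  have hEu : E * u^2 = S := by
    have hu2 : u^2 = (S:ℝ) ^ ((34:ℝ)/100) := by
      rw [hudef, ← Real.rpow_natCast ((S:ℝ) ^ ((17:ℝ)/100)) 2, ← Real.rpow_mul hS0.le]
      norm_num
    rw [hEdef, hu2, ← Real.rpow_add hS0]
    norm_num
  have hDk : ∀ y, D y ≤ k := by
    intro y
    rw [hDdef]
    exact le_trans (Finset.card_filter_le _ _) (le_of_eq (Finset.card_range k))
  have hcard_le : ∀ x, 1 ≤ x →
      ((Finset.Icc 3 S).filter fun s => 3 ∣ s ∧ IsHitter M s x).card ≤ D (x-1) := by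
    intro x hx
    rw [hDdef]
    exact scales_le hM hk hx
  rcases le_or_gt u 3 with hu3 | hu3
  · -- trivial branch: the filter is empty
    have hF : F = ∅ := by
      rw [Finset.eq_empty_iff_forall_notMem]
      intro x hxF
      rw [hFdef, Finset.mem_filter, Finset.mem_Icc] at hxF
      obtain ⟨⟨hx1, hxn⟩, hxt⟩ := hxF
      have h1 : (((Finset.Icc 3 S).filter fun s => 3 ∣ s ∧ IsHitter M s x).card : ℝ) ≤ (k:ℝ) := by
        exact_mod_cast le_trans (hcard_le x hx1) (hDk _)
      have hSk : (S:ℝ) = 3 * (k:ℝ) := by exact_mod_cast hk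
      have htval : t = (S:ℝ) / u := by rw [eq_div_iff hu0.ne']; exact htu
      have h2 : (k:ℝ) ≤ t := by
        rw [htval, hSk]
        calc (k:ℝ) = (3 * (k:ℝ)) / 3 := by ring
          _ ≤ (3*(k:ℝ))/u := by
              apply div_le_div_of_nonneg_left (by positivity) hu0 hu3
      linarith
    rw [hF]
    simp only [Finset.card_empty, Nat.cast_zero]
    positivity
  · -- main branch
    have hn : M ^ S = (M^3)^k := by rw [hk, pow_mul]
    have h2t : (0:ℝ) < (2:ℝ)^t := Real.rpow_pos_of_pos (by norm_num) _
    -- Step 1 : counting bound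
    have hstep1 : (F.card : ℝ) * (2:ℝ) ^ t ≤ (((M^3 + 2*M)^k : ℕ) : ℝ) := by
      have hb : ∀ x ∈ F, (2:ℝ) ^ t ≤ ((2 ^ (D (x-1)) : ℕ) : ℝ) := by
        intro x hxF
        rw [hFdef, Finset.mem_filter, Finset.mem_Icc] at hxF
        obtain ⟨⟨hx1, hxn⟩, hxt⟩ := hxF
        have h1 : t < ((D (x-1) : ℕ) : ℝ) :=
          lt_of_lt_of_le hxt (by exact_mod_cast hcard_le x hx1)
        calc (2:ℝ)^t ≤ (2:ℝ)^((D (x-1) : ℕ) : ℝ) :=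
              Real.rpow_le_rpow_of_exponent_le (by norm_num) h1.le
          _ = ((2 ^ (D (x-1)) : ℕ) : ℝ) := by
              rw [Real.rpow_natCast]
              push_cast
              ring
      have hinj : ∀ a ∈ F, ∀ b ∈ F, a - 1 = b - 1 → a = b := by
        intro a ha b hb hab
        rw [hFdef, Finset.mem_filter, Finset.mem_Icc] at ha hb
        omega
      have hsub : F.image (fun x => x - 1) ⊆ Finset.range ((M^3)^k) := by
        intro y hy
        rw [Finset.mem_image] at hy
        obtain ⟨x, hxF, rfl⟩ := hy
        rw [hFdef, Finset.mem_filter, Finset.mem_Icc] at hxF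
        rw [Finset.mem_range, ← hn]
        omega
      have hw : ∀ a, (fun a => if a % M^2 = 0 ∨ a % M^2 = M^2 - 1 then 2 else 1) (a % M^3) =
          (fun a => if a % M^2 = 0 ∨ a % M^2 = M^2 - 1 then 2 else 1) a := by
        intro a
        have hdvd : M^2 ∣ M^3 := ⟨M, by ring⟩
        simp only [Nat.mod_mod_of_dvd a hdvd]
      have hident : ∑ y ∈ Finset.range ((M^3)^k), 2 ^ (D y) = (M^3 + 2*M)^k := by
        have hprod : ∀ y, 2 ^ (D y) = ∏ j ∈ Finset.range k,
            (if (y / (M^3)^j) % M^2 = 0 ∨ (y / (M^3)^j) % M^2 = M^2 - 1 then 2 else 1) := by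
          intro y
          simp only [hDdef]
          exact pow_card_eq_prod (Finset.range k) _
        rw [Finset.sum_congr rfl (fun y _ => hprod y),
          prod_digit_sum (M^3) (pow_pos hMpos 3)
            (fun a => if a % M^2 = 0 ∨ a % M^2 = M^2 - 1 then 2 else 1) hw k,
          block_count M hM]
      have hNsum : ∑ x ∈ F, 2 ^ (D (x-1)) ≤ (M^3 + 2*M)^k := by
        rw [← hident, ← Finset.sum_image (f := fun y => 2 ^ D y) (g := fun x => x - 1) hinj]
        exact Finset.sum_le_sum_of_subset hsub
      calc (F.card : ℝ) * (2:ℝ)^t = ∑ _x ∈ F, (2:ℝ)^t := by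
            rw [Finset.sum_const, nsmul_eq_mul]
        _ ≤ ∑ x ∈ F, ((2 ^ (D (x-1)) : ℕ) : ℝ) := Finset.sum_le_sum hb
        _ = ((∑ x ∈ F, 2 ^ (D (x-1)) : ℕ) : ℝ) := by push_cast; ring
        _ ≤ (((M^3 + 2*M)^k : ℕ) : ℝ) := by exact_mod_cast hNsum
    -- Step 2 : analytic bound
    have hM0 : (0:ℝ) < (M:ℝ) := by exact_mod_cast hMpos
    have hMR : (2:ℝ) ≤ (M:ℝ) := by exact_mod_cast hM
    set p : ℝ := 2 / (M:ℝ)^2 with hpdef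
    have hp0 : 0 ≤ p := by positivity
    have hM4 : (4:ℝ) ≤ (M:ℝ)^2 := by nlinarith
    have hp1 : p ≤ 1/2 := by
      rw [hpdef, div_le_div_iff₀ (by positivity) (by norm_num)]
      linarith
    have hpu : p * u ≤ 2 := by
      rw [hpdef, div_mul_eq_mul_div, div_le_iff₀ (by positivity)]
      nlinarith [hM2]
    have h1p : (0:ℝ) < 1 + p := by linarith
    have hfinal : (((M^3 + 2*M)^k : ℕ) : ℝ) ≤ (M ^ S : ℝ) * Real.exp (-E / 2) * (2:ℝ) ^ t := by
      have hcast : (((M^3 + 2*M)^k : ℕ) : ℝ) = ((M:ℝ)^3 + 2*(M:ℝ))^k := by push_cast; ring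
      have hsplitM : (M:ℝ)^3 + 2*(M:ℝ) = (M:ℝ)^3 * (1 + p) := by
        rw [hpdef]; field_simp
      have hMS : ((M:ℝ)^3)^k = (M:ℝ)^S := by rw [← pow_mul, hk]
      rw [hcast, hsplitM, mul_pow, hMS]
      have hMS0 : (0:ℝ) < (M:ℝ)^S := by positivity
      rw [mul_assoc]
      apply mul_le_mul_of_nonneg_left _ hMS0.le
      -- (1+p)^k ≤ exp (−E/2) * 2^t
      have hexp1 : (1+p)^k = Real.exp ((k:ℝ) * Real.log (1+p)) := by
        rw [Real.exp_nat_mul, Real.exp_log h1p]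
      have hexp2 : (2:ℝ)^t = Real.exp (t * Real.log 2) := by
        rw [Real.rpow_def_of_pos (by norm_num), mul_comm]
      rw [hexp1, hexp2, ← Real.exp_add]
      apply Real.exp_le_exp.mpr
      -- k * log(1+p) ≤ −E/2 + t * log 2
      have hlog : Real.log (1+p) ≤ (p^2+2*p)/(2+2*p) := log_aux p hp0
      have hmain := analytic_ineq u p (Real.log 2) hu3 hp0 hp1 hpu (le_of_lt Real.log_two_gt_d9)
      have hkS : (k:ℝ) = (S:ℝ)/3 := by
        have : (S:ℝ) = 3 * (k:ℝ) := by exact_mod_cast hk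
        rw [this]; ring
      have hts : t = (S:ℝ)/u := by rw [eq_div_iff hu0.ne']; exact htu
      have hEs : E = (S:ℝ)/u^2 := by rw [eq_div_iff (by positivity)]; exact hEu
      rw [hkS, hts, hEs]
      have hstepA : (S:ℝ)/3 * Real.log (1+p) ≤ (S:ℝ) * ((p^2+2*p)/(2+2*p)/3) := by
        have h := mul_le_mul_of_nonneg_left hlog (by positivity : (0:ℝ) ≤ (S:ℝ)/3)
        calc (S:ℝ)/3 * Real.log (1+p) ≤ (S:ℝ)/3 * ((p^2+2*p)/(2+2*p)) := h
          _ = (S:ℝ) * ((p^2+2*p)/(2+2*p)/3) := by ring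
      have hstepB : (S:ℝ) * ((p^2+2*p)/(2+2*p)/3) ≤
          (S:ℝ) * (Real.log 2/u - 1/(2*u^2)) := mul_le_mul_of_nonneg_left hmain hS0.le
      have hid : (S:ℝ) * (Real.log 2/u - 1/(2*u^2)) =
          -((S:ℝ)/u^2)/2 + (S:ℝ)/u * Real.log 2 := by field_simp; ring
      linarith
    -- combine
    have hcomb : (F.card : ℝ) * (2:ℝ)^t ≤ (M ^ S : ℝ) * Real.exp (-E / 2) * (2:ℝ)^t :=
      le_trans hstep1 hfinal
    exact le_of_mul_le_mul_right hcomb h2t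
end

section
/- Let S ≥ 1 be an integer, n = 2^S, and let A = (a_1, …, a_n) be any real sequence. Fix a scale-s interval (l, r] with r = l + 2^s, 1 ≤ s ≤ S, and 2^s dividing l, and let A' be the sequence obtained from A by swapping the two halves of (l, r]: a'_x := a_{x + 2^{s−1}} for l < x ≤ l + 2^{s−1}, a'_x := a_{x − 2^{s−1}} for l + 2^{s−1} < x ≤ r, and a'_x := a_x for all other x. Then treemd_{2,S}(A') = treemd_{2,S}(A). -/
/-- Sum of the sequence `A` over the interval of indices `(l, r] = {l+1, …, r}`. -/
noncomputable def iSum (A : ℕ → ℝ) (l r : ℕ) : ℝ := ∑ x ∈ Finset.Ioc l r, A x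

/-- Total deviation `md_M` of the scale-`s` interval `(l, l + M^s]` of the sequence `A`. -/
noncomputable def mdAt (M s l : ℕ) (A : ℕ → ℝ) : ℝ :=
  ∑ i ∈ Finset.range M,
    |iSum A (l + i * M ^ (s - 1)) (l + (i + 1) * M ^ (s - 1)) -
      (1 / (M : ℝ)) * iSum A l (l + M ^ s)|

/-- Tree total deviation `treemd_{M,S}` of the sequence `A` (indexed by `{1, …, M^S}`). -/
noncomputable def treemd (M S : ℕ) (A : ℕ → ℝ) : ℝ :=
  ∑ s ∈ Finset.Icc 1 S, ∑ k ∈ Finset.range (M ^ (S - s)), mdAt M s (k * M ^ s) A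

/-! ### Auxiliary definitions and lemmas -/

/-- The sequence obtained from `A` by swapping the two halves of `(l, l+2^s]`. -/
noncomputable def swB (A : ℕ → ℝ) (s l : ℕ) : ℕ → ℝ := fun x =>
  if l < x ∧ x ≤ l + 2 ^ (s - 1) then A (x + 2 ^ (s - 1))
  else if l + 2 ^ (s - 1) < x ∧ x ≤ l + 2 ^ s then A (x - 2 ^ (s - 1))
  else A x

lemma hh_pow (s : ℕ) (hs1 : 1 ≤ s) : (2:ℕ) ^ s = 2 ^ (s - 1) + 2 ^ (s - 1) := by
  rw [← two_mul, ← pow_succ']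
  congr 1
  omega

lemma iSum_split (C : ℕ → ℝ) (a b c : ℕ) (h1 : a ≤ b) (h2 : b ≤ c) :
    iSum C a c = iSum C a b + iSum C b c :=
  (Finset.sum_Ioc_consecutive _ h1 h2).symm

/-- Dyadic dichotomy: a scale-`u` interval and a scale-`v` interval (`u ≤ v`) are
disjoint or the first is contained in the second. -/
lemma dyadic (u v a b : ℕ) (huv : u ≤ v) (ha : 2 ^ u ∣ a) (hb : 2 ^ u ∣ b) (hb' : 2 ^ v ∣ b) :
    a + 2 ^ u ≤ b ∨ b + 2 ^ v ≤ a ∨ (b ≤ a ∧ a + 2 ^ u ≤ b + 2 ^ v) := by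
  rcases lt_or_ge a b with h | h
  · left
    have hd : 2 ^ u ∣ b - a := Nat.dvd_sub hb ha
    have h2 : 2 ^ u ≤ b - a := Nat.le_of_dvd (Nat.sub_pos_of_lt h) hd
    have h3 := Nat.add_le_add_right h2 a
    rw [Nat.sub_add_cancel h.le] at h3
    linarith
  · rcases le_or_gt (b + 2 ^ v) a with h' | h'
    · exact Or.inr (Or.inl h')
    · refine Or.inr (Or.inr ⟨h, ?_⟩)
      have hbv : 2 ^ u ∣ b + 2 ^ v := Dvd.dvd.add hb (pow_dvd_pow 2 huv)
      have hd : 2 ^ u ∣ b + 2 ^ v - a := Nat.dvd_sub hbv ha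
      have h2 : 2 ^ u ≤ b + 2 ^ v - a := Nat.le_of_dvd (Nat.sub_pos_of_lt h') hd
      have h3 := Nat.add_le_add_right h2 a
      rw [Nat.sub_add_cancel h'.le] at h3
      linarith

section Swap

variable (A : ℕ → ℝ) (s l : ℕ)

lemma L1 (m r : ℕ) (hc : r ≤ l ∨ l + 2 ^ s ≤ m) : iSum (swB A s l) m r = iSum A m r := by
  have hle : (2:ℕ) ^ (s - 1) ≤ 2 ^ s := Nat.pow_le_pow_right (by norm_num) (Nat.sub_le s 1)
  have hpos : 0 < (2:ℕ) ^ (s - 1) := Nat.pow_pos (by norm_num)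
  unfold iSum
  apply Finset.sum_congr rfl
  intro x hx
  rw [Finset.mem_Ioc] at hx
  unfold swB
  have n1 : ¬(l < x ∧ x ≤ l + 2 ^ (s - 1)) := by
    rintro ⟨h1, h2⟩; rcases hc with hc | hc
    · linarith [hx.2]
    · linarith [hx.1]
  have n2 : ¬(l + 2 ^ (s - 1) < x ∧ x ≤ l + 2 ^ s) := by
    rintro ⟨h1, h2⟩; rcases hc with hc | hc
    · linarith [hx.2]
    · linarith [hx.1]
  rw [if_neg n1, if_neg n2]

lemma L2 (m r : ℕ) (hm : l ≤ m) (hr : r ≤ l + 2 ^ (s - 1)) :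
    iSum (swB A s l) m r = iSum A (m + 2 ^ (s - 1)) (r + 2 ^ (s - 1)) := by
  unfold iSum
  rw [← Finset.map_add_right_Ioc, Finset.sum_map]
  apply Finset.sum_congr rfl
  intro x hx
  rw [Finset.mem_Ioc] at hx
  simp only [addRightEmbedding_apply]
  unfold swB
  rw [if_pos ⟨by linarith [hx.1], by linarith [hx.2]⟩]

lemma L3 (hs1 : 1 ≤ s) (m r : ℕ) (hm : l ≤ m) (hr : r ≤ l + 2 ^ (s - 1)) :
    iSum (swB A s l) (m + 2 ^ (s - 1)) (r + 2 ^ (s - 1)) = iSum A m r := by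
  have hh := hh_pow s hs1
  unfold iSum
  rw [← Finset.map_add_right_Ioc, Finset.sum_map]
  apply Finset.sum_congr rfl
  intro x hx
  rw [Finset.mem_Ioc] at hx
  simp only [addRightEmbedding_apply]
  unfold swB
  have n1 : ¬(l < x + 2 ^ (s - 1) ∧ x + 2 ^ (s - 1) ≤ l + 2 ^ (s - 1)) := by
    rintro ⟨_, h2⟩; linarith [hx.1]
  rw [if_neg n1, if_pos ⟨by linarith [hx.1], by rw [hh]; linarith [hx.2]⟩, Nat.add_sub_cancel]

lemma L4 (hs1 : 1 ≤ s) (m r : ℕ) (hm : m ≤ l) (hr : l + 2 ^ s ≤ r) :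
    iSum (swB A s l) m r = iSum A m r := by
  have hh := hh_pow s hs1
  have c2 : l ≤ l + 2 ^ (s - 1) := Nat.le_add_right _ _
  have c3 : l + 2 ^ (s - 1) ≤ l + 2 ^ s := by rw [hh]; linarith
  have e2 : iSum (swB A s l) l (l + 2 ^ (s - 1)) = iSum A (l + 2 ^ (s - 1)) (l + 2 ^ s) := by
    rw [L2 A s l l (l + 2 ^ (s - 1)) le_rfl le_rfl]
    congr 1
    rw [hh]; ring
  have e3 : iSum (swB A s l) (l + 2 ^ (s - 1)) (l + 2 ^ s) = iSum A l (l + 2 ^ (s - 1)) := by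
    have h3 := L3 A s l hs1 l (l + 2 ^ (s - 1)) le_rfl le_rfl
    rw [← h3]
    congr 1
    rw [hh]; ring
  rw [iSum_split (swB A s l) m l r hm (by linarith), iSum_split A m l r hm (by linarith),
    iSum_split (swB A s l) l (l + 2 ^ (s - 1)) r c2 (by linarith),
    iSum_split A l (l + 2 ^ (s - 1)) r c2 (by linarith),
    iSum_split (swB A s l) (l + 2 ^ (s - 1)) (l + 2 ^ s) r c3 hr,
    iSum_split A (l + 2 ^ (s - 1)) (l + 2 ^ s) r c3 hr,
    L1 A s l m l (Or.inl le_rfl), L1 A s l (l + 2 ^ s) r (Or.inr le_rfl), e2, e3]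
  ring

/-- A dyadic interval at scale `u ≥ s` is disjoint from or contains `(l, l+2^s]`,
hence its `swB`-sum is unchanged. -/
lemma L5 (hs1 : 1 ≤ s) (hdvd : 2 ^ s ∣ l) (u m r : ℕ) (hsu : s ≤ u) (hm : 2 ^ u ∣ m)
    (hr : r = m + 2 ^ u) : iSum (swB A s l) m r = iSum A m r := by
  subst hr
  rcases dyadic s u l m hsu hdvd (dvd_trans (pow_dvd_pow 2 hsu) hm) hm with h | h | ⟨h1, h2⟩
  · exact L1 A s l _ _ (Or.inr h)
  · exact L1 A s l _ _ (Or.inl h)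
  · exact L4 A s l hs1 _ _ h1 h2

end Swap

lemma mdAt_eq (t p : ℕ) (ht : 1 ≤ t) (C : ℕ → ℝ) :
    mdAt 2 t p C =
      |iSum C p (p + 2 ^ (t - 1)) - (1 / 2) * iSum C p (p + 2 ^ t)| +
        |iSum C (p + 2 ^ (t - 1)) (p + 2 ^ t) - (1 / 2) * iSum C p (p + 2 ^ t)| := by
  have hh := hh_pow t ht
  unfold mdAt
  rw [Finset.sum_range_succ, Finset.sum_range_succ, Finset.sum_range_zero, zero_add]
  norm_num
  rw [show p + 2 * 2 ^ (t - 1) = p + 2 ^ t by rw [hh]; ring]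

section MD

variable (A : ℕ → ℝ) (s l : ℕ)

lemma md_large (hs1 : 1 ≤ s) (hdvd : 2 ^ s ∣ l) (t k : ℕ) (hst : s ≤ t) :
    mdAt 2 t (k * 2 ^ t) (swB A s l) = mdAt 2 t (k * 2 ^ t) A := by
  have ht1 : 1 ≤ t := hs1.trans hst
  have hht := hh_pow t ht1
  have hpos : 0 < (2:ℕ) ^ (t - 1) := Nat.pow_pos (by norm_num)
  set p := k * 2 ^ t with hpdef
  have hpt : 2 ^ t ∣ p := dvd_mul_left _ _
  rw [mdAt_eq t p ht1, mdAt_eq t p ht1]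
  rcases eq_or_lt_of_le hst with heq | hlt
  · -- t = s
    subst heq
    rcases dyadic s s l p le_rfl hdvd hpt hpt with h | h | ⟨h1, h2⟩
    · -- l + 2^s ≤ p
      rw [L1 A s l p (p + 2 ^ (s - 1)) (Or.inr h),
        L1 A s l (p + 2 ^ (s - 1)) (p + 2 ^ s) (Or.inr (by linarith [Nat.le_add_right p (2 ^ (s-1))])),
        L1 A s l p (p + 2 ^ s) (Or.inr h)]
    · -- p + 2^s ≤ l
      rw [L1 A s l p (p + 2 ^ (s - 1)) (Or.inl (by rw [hht] at h; linarith)),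
        L1 A s l (p + 2 ^ (s - 1)) (p + 2 ^ s) (Or.inl h),
        L1 A s l p (p + 2 ^ s) (Or.inl h)]
    · -- p = l
      have hpl : p = l := le_antisymm h1 (by linarith)
      rw [hpl]
      have hh := hh_pow s hs1
      have e1 : iSum (swB A s l) l (l + 2 ^ (s - 1)) = iSum A (l + 2 ^ (s - 1)) (l + 2 ^ s) := by
        rw [L2 A s l l (l + 2 ^ (s - 1)) le_rfl le_rfl]
        congr 1
        rw [hh]; ring
      have e2 : iSum (swB A s l) (l + 2 ^ (s - 1)) (l + 2 ^ s) = iSum A l (l + 2 ^ (s - 1)) := by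
        have h3 := L3 A s l hs1 l (l + 2 ^ (s - 1)) le_rfl le_rfl
        rw [← h3]
        congr 1
        rw [hh]; ring
      rw [e1, e2, L4 A s l hs1 l (l + 2 ^ s) le_rfl le_rfl]
      ring
  · -- s < t
    have hs2 : s ≤ t - 1 := by omega
    have hdt : 2 ^ (t - 1) ∣ p := dvd_trans (pow_dvd_pow 2 (Nat.sub_le t 1)) hpt
    rw [L5 A s l hs1 hdvd (t - 1) p (p + 2 ^ (t - 1)) hs2 hdt rfl,
      L5 A s l hs1 hdvd (t - 1) (p + 2 ^ (t - 1)) (p + 2 ^ t) hs2 (Dvd.dvd.add hdt dvd_rfl)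
        (by rw [hht]; ring),
      L5 A s l hs1 hdvd t p (p + 2 ^ t) hst hpt rfl]

lemma md_left (t k : ℕ) (ht : 1 ≤ t) (h1 : l ≤ k * 2 ^ t)
    (h2 : (k + 1) * 2 ^ t ≤ l + 2 ^ (s - 1)) :
    mdAt 2 t (k * 2 ^ t) (swB A s l) = mdAt 2 t (k * 2 ^ t + 2 ^ (s - 1)) A := by
  have hht := hh_pow t ht
  have hpos : 0 < (2:ℕ) ^ (t - 1) := Nat.pow_pos (by norm_num)
  set p := k * 2 ^ t with hpdef
  have hp2 : p + 2 ^ t = (k + 1) * 2 ^ t := by rw [hpdef]; ring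
  have hb : p + 2 ^ t ≤ l + 2 ^ (s - 1) := by rw [hp2]; exact h2
  have hb1 : p + 2 ^ (t - 1) ≤ l + 2 ^ (s - 1) := by rw [hht] at hb; linarith
  rw [mdAt_eq t p ht, mdAt_eq t (p + 2 ^ (s - 1)) ht,
    show p + 2 ^ (s - 1) + 2 ^ (t - 1) = p + 2 ^ (t - 1) + 2 ^ (s - 1) by ring,
    show p + 2 ^ (s - 1) + 2 ^ t = p + 2 ^ t + 2 ^ (s - 1) by ring,
    L2 A s l p (p + 2 ^ (t - 1)) h1 hb1,
    L2 A s l (p + 2 ^ (t - 1)) (p + 2 ^ t) (le_trans h1 (Nat.le_add_right _ _)) hb,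
    L2 A s l p (p + 2 ^ t) h1 hb]

lemma md_right (hs1 : 1 ≤ s) (t k : ℕ) (ht : 1 ≤ t) (h1 : l ≤ k * 2 ^ t)
    (h2 : (k + 1) * 2 ^ t ≤ l + 2 ^ (s - 1)) :
    mdAt 2 t (k * 2 ^ t + 2 ^ (s - 1)) (swB A s l) = mdAt 2 t (k * 2 ^ t) A := by
  have hht := hh_pow t ht
  have hpos : 0 < (2:ℕ) ^ (t - 1) := Nat.pow_pos (by norm_num)
  set p := k * 2 ^ t with hpdef
  have hp2 : p + 2 ^ t = (k + 1) * 2 ^ t := by rw [hpdef]; ring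
  have hb : p + 2 ^ t ≤ l + 2 ^ (s - 1) := by rw [hp2]; exact h2
  have hb1 : p + 2 ^ (t - 1) ≤ l + 2 ^ (s - 1) := by rw [hht] at hb; linarith
  rw [mdAt_eq t p ht, mdAt_eq t (p + 2 ^ (s - 1)) ht,
    show p + 2 ^ (s - 1) + 2 ^ (t - 1) = p + 2 ^ (t - 1) + 2 ^ (s - 1) by ring,
    show p + 2 ^ (s - 1) + 2 ^ t = p + 2 ^ t + 2 ^ (s - 1) by ring,
    L3 A s l hs1 p (p + 2 ^ (t - 1)) h1 hb1,
    L3 A s l hs1 (p + 2 ^ (t - 1)) (p + 2 ^ t) (le_trans h1 (Nat.le_add_right _ _)) hb,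
    L3 A s l hs1 p (p + 2 ^ t) h1 hb]

lemma md_out (t k : ℕ) (ht : 1 ≤ t)
    (hd : (k + 1) * 2 ^ t ≤ l ∨ l + 2 ^ s ≤ k * 2 ^ t) :
    mdAt 2 t (k * 2 ^ t) (swB A s l) = mdAt 2 t (k * 2 ^ t) A := by
  have hht := hh_pow t ht
  have hpos : 0 < (2:ℕ) ^ (t - 1) := Nat.pow_pos (by norm_num)
  set p := k * 2 ^ t with hpdef
  have hp2 : p + 2 ^ t = (k + 1) * 2 ^ t := by rw [hpdef]; ring
  rcases hd with hd | hd
  · have hb : p + 2 ^ t ≤ l := by rw [hp2]; exact hd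
    rw [mdAt_eq t p ht, mdAt_eq t p ht,
      L1 A s l p (p + 2 ^ (t - 1)) (Or.inl (by rw [hht] at hb; linarith)),
      L1 A s l (p + 2 ^ (t - 1)) (p + 2 ^ t) (Or.inl hb),
      L1 A s l p (p + 2 ^ t) (Or.inl hb)]
  · rw [mdAt_eq t p ht, mdAt_eq t p ht,
      L1 A s l p (p + 2 ^ (t - 1)) (Or.inr hd),
      L1 A s l (p + 2 ^ (t - 1)) (p + 2 ^ t)
        (Or.inr (le_trans hd (Nat.le_add_right _ _))),
      L1 A s l p (p + 2 ^ t) (Or.inr hd)]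

lemma sum_small (S : ℕ) (hs1 : 1 ≤ s) (hdvd : 2 ^ s ∣ l) (hl : l < 2 ^ S) (hsS : s ≤ S)
    (t : ℕ) (ht1 : 1 ≤ t) (hts : t < s) :
    ∑ k ∈ Finset.range (2 ^ (S - t)), mdAt 2 t (k * 2 ^ t) (swB A s l) =
      ∑ k ∈ Finset.range (2 ^ (S - t)), mdAt 2 t (k * 2 ^ t) A := by
  obtain ⟨c, hc⟩ := hdvd
  have hh := hh_pow s hs1
  obtain ⟨e, he⟩ : ∃ e, (2:ℕ) ^ (s - 1 - t) = e := ⟨_, rfl⟩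
  have he1 : 1 ≤ e := he ▸ Nat.one_le_two_pow
  have he2 : e * 2 ^ t = 2 ^ (s - 1) := by rw [← he, ← pow_add]; congr 1; omega
  have h2e : 2 * e * 2 ^ t = 2 ^ s := by
    rw [show 2 * e * 2 ^ t = e * 2 ^ t + e * 2 ^ t by ring, he2, ← hh]
  obtain ⟨L, hL⟩ : ∃ L, 2 * e * c = L := ⟨_, rfl⟩
  have hlL : l = L * 2 ^ t := by rw [← hL, hc, ← h2e]; ring
  obtain ⟨N, hN⟩ : ∃ N, (2:ℕ) ^ (S - t) = N := ⟨_, rfl⟩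
  have hbound : L + 2 * e ≤ N := by
    have hcb : c < 2 ^ (S - s) := by
      have hSs : (2:ℕ) ^ (S - s) * 2 ^ s = 2 ^ S := by rw [← pow_add]; congr 1; omega
      by_contra hcon
      push_neg at hcon
      have : (2:ℕ) ^ S ≤ 2 ^ s * c := by
        calc (2:ℕ) ^ S = 2 ^ (S - s) * 2 ^ s := hSs.symm
        _ ≤ c * 2 ^ s := Nat.mul_le_mul_right _ hcon
        _ = 2 ^ s * c := by ring
      omega
    have hmul : (L + 2 * e) * 2 ^ t ≤ N * 2 ^ t := by
      have h1 : (L + 2 * e) * 2 ^ t = (c + 1) * 2 ^ s := by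
        rw [← hL, ← h2e]; ring
      have h2 : N * 2 ^ t = 2 ^ S := by rw [← hN, ← pow_add]; congr 1; omega
      rw [h1, h2]
      calc (c + 1) * 2 ^ s ≤ 2 ^ (S - s) * 2 ^ s := Nat.mul_le_mul_right _ hcb
        _ = 2 ^ S := by rw [← pow_add]; congr 1; omega
    exact Nat.le_of_mul_le_mul_right hmul (Nat.pow_pos (by norm_num))
  rw [hN]
  refine Finset.sum_nbij'
    (fun k => if L ≤ k ∧ k < L + e then k + e else if L + e ≤ k ∧ k < L + 2 * e then k - e else k)
    (fun k => if L ≤ k ∧ k < L + e then k + e else if L + e ≤ k ∧ k < L + 2 * e then k - e else k)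
    ?_ ?_ ?_ ?_ ?_
  · intro a ha
    rw [Finset.mem_range] at ha ⊢
    split_ifs <;> omega
  · intro a ha
    rw [Finset.mem_range] at ha ⊢
    split_ifs <;> omega
  · intro a _
    split_ifs <;> omega
  · intro a _
    split_ifs <;> omega
  · intro k hk
    rw [Finset.mem_range] at hk
    rcases lt_or_ge k L with hcase1 | hge
    · -- outside, left of interval
      rw [if_neg (by omega), if_neg (by omega)]
      refine md_out A s l t k ht1 (Or.inl ?_)
      calc (k + 1) * 2 ^ t ≤ L * 2 ^ t := Nat.mul_le_mul_right _ (by omega)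
        _ = l := hlL.symm
    rcases lt_or_ge k (L + e) with hcase2 | hge2
    · -- left half
      rw [if_pos ⟨hge, hcase2⟩]
      have h1 : l ≤ k * 2 ^ t := by
        rw [hlL]; exact Nat.mul_le_mul_right _ hge
      have h2 : (k + 1) * 2 ^ t ≤ l + 2 ^ (s - 1) := by
        rw [hlL, ← he2, show L * 2 ^ t + e * 2 ^ t = (L + e) * 2 ^ t by ring]
        exact Nat.mul_le_mul_right _ (by omega)
      rw [md_left A s l t k ht1 h1 h2]
      congr 1
      rw [← he2]; ring
    rcases lt_or_ge k (L + 2 * e) with hcase3 | hge3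
    · -- right half
      rw [if_neg (by omega), if_pos ⟨hge2, hcase3⟩]
      obtain ⟨j, hj⟩ : ∃ j, k - e = j := ⟨_, rfl⟩
      have hkj : k = j + e := by omega
      have h1 : l ≤ j * 2 ^ t := by
        rw [hlL]; exact Nat.mul_le_mul_right _ (by omega)
      have h2 : (j + 1) * 2 ^ t ≤ l + 2 ^ (s - 1) := by
        rw [hlL, ← he2, show L * 2 ^ t + e * 2 ^ t = (L + e) * 2 ^ t by ring]
        exact Nat.mul_le_mul_right _ (by omega)
      have hkp : k * 2 ^ t = j * 2 ^ t + 2 ^ (s - 1) := by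
        rw [hkj, ← he2]; ring
      rw [hkp, md_right A s l hs1 t j ht1 h1 h2, hj]
    · -- outside, right of interval
      rw [if_neg (by omega), if_neg (by omega)]
      refine md_out A s l t k ht1 (Or.inr ?_)
      calc l + 2 ^ s = (L + 2 * e) * 2 ^ t := by rw [hlL, ← h2e]; ring
        _ ≤ k * 2 ^ t := Nat.mul_le_mul_right _ hge3

end MD

/-- For `M = 2`, `S ≥ 1`, `n = 2^S`: swapping the two halves of a single
scale-`s` interval `(l, l+2^s]` (with `1 ≤ s ≤ S`, `2^s ∣ l`, `l < 2^S`) leaves the tree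
total deviation unchanged: `treemd_{2,S}(A') = treemd_{2,S}(A)`, where `A'` agrees with `A`
outside `(l, l+2^s]` and interchanges the two halves of that interval. -/
theorem stmt15 (S : ℕ) (hS : 1 ≤ S) (A : ℕ → ℝ) (s : ℕ) (hs1 : 1 ≤ s) (hsS : s ≤ S)
    (l : ℕ) (hdvd : 2 ^ s ∣ l) (hl : l < 2 ^ S) :
    treemd 2 S (fun x =>
        if l < x ∧ x ≤ l + 2 ^ (s - 1) then A (x + 2 ^ (s - 1))
        else if l + 2 ^ (s - 1) < x ∧ x ≤ l + 2 ^ s then A (x - 2 ^ (s - 1))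
        else A x) =
      treemd 2 S A := by
  show treemd 2 S (swB A s l) = treemd 2 S A
  unfold treemd
  apply Finset.sum_congr rfl
  intro t ht
  rw [Finset.mem_Icc] at ht
  rcases lt_or_ge t s with hlt | hge
  · exact sum_small A s l S hs1 hdvd hl hsS t ht.1 hlt
  · exact Finset.sum_congr rfl fun k _ => md_large A s l hs1 hdvd t k hge
end
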